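/- Define χ from the addition-free binary Veblen term system φ_ω0 to theta-terms by χ(0) = 0 and χ(φ_n α) = ϑ_0 ϑ_1^n χ(α). Then χ is order-preserving: α < β implies χ(α) < χ(β). -/
import Mathlib


/-- Addition-free theta terms. -/
inductive TTerm : Type
  | zero : TTerm
  | theta : ℕ → TTerm → TTerm
  deriving DecidableEq

namespace TTerm

/-- `S 0 = -1`, `S (ϑ_i α) = i`. -/
def S : TTerm → ℤ
  | zero => -1
  | theta i _ => i

/-- Membership in the term system `T`: `ϑ_i α` is formed only when `S α ≤ i + 1`. -/
inductive WF : TTerm → Prop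
  | zero : WF zero
  | theta {i : ℕ} {a : TTerm} : WF a → S a ≤ (i : ℤ) + 1 → WF (theta i a)

/-- Coefficients `k_i`. -/
def k (i : ℕ) : TTerm → TTerm
  | zero => zero
  | theta j b => if j ≤ i then theta j b else k i b

mutual
/-- The linear order on theta terms. -/
inductive Lt : TTerm → TTerm → Prop
  | zero {a : TTerm} : a ≠ zero → Lt zero a
  | idx {i j : ℕ} {a b : TTerm} : i < j → Lt (theta i a) (theta j b)
  | left {i : ℕ} {a b : TTerm} : Lt a b → Lt (k i a) (theta i b) →
      Lt (theta i a) (theta i b)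
  | right {i : ℕ} {a b : TTerm} : Lt b a → Le (theta i a) (k i b) →
      Lt (theta i a) (theta i b)

inductive Le : TTerm → TTerm → Prop
  | refl {a : TTerm} : Le a a
  | of_lt {a b : TTerm} : Lt a b → Le a b
end

end TTerm

/-- Addition-free Veblen terms `φ_ω 0`. -/
inductive VTerm : Type
  | zero : VTerm
  | phi : ℕ → VTerm → VTerm
  deriving DecidableEq

mutual
/-- The order on Veblen terms. -/
inductive VTerm.Lt : VTerm → VTerm → Prop
  | zero {b : VTerm} : b ≠ VTerm.zero → VTerm.Lt VTerm.zero b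
  | lt {n m : ℕ} {a b : VTerm} : n < m → VTerm.Lt a (VTerm.phi m b) →
      VTerm.Lt (VTerm.phi n a) (VTerm.phi m b)
  | eq {n : ℕ} {a b : VTerm} : VTerm.Lt a b → VTerm.Lt (VTerm.phi n a) (VTerm.phi n b)
  | gt {n m : ℕ} {a b : VTerm} : m < n → VTerm.Le (VTerm.phi n a) b →
      VTerm.Lt (VTerm.phi n a) (VTerm.phi m b)

inductive VTerm.Le : VTerm → VTerm → Prop
  | refl {a : VTerm} : VTerm.Le a a
  | of_lt {a b : VTerm} : VTerm.Lt a b → VTerm.Le a b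
end

/-- `χ(0) = 0`, `χ(φ_n α) = ϑ_0 ϑ_1^n χ(α)`. -/
def chi : VTerm → TTerm
  | VTerm.zero => TTerm.zero
  | VTerm.phi n a => TTerm.theta 0 ((TTerm.theta 1)^[n] (chi a))


section Aux

open TTerm

/-- Terms built only with indices 0 and 1. -/
inductive Tw : TTerm → Prop
  | zero : Tw TTerm.zero
  | mk0 {x : TTerm} : Tw x → Tw (TTerm.theta 0 x)
  | mk1 {x : TTerm} : Tw x → Tw (TTerm.theta 1 x)

lemma k1_eq {x : TTerm} (hx : Tw x) : TTerm.k 1 x = x := by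
  cases hx <;> simp [TTerm.k]

lemma Tw_tow {x : TTerm} (hx : Tw x) (n : ℕ) : Tw ((TTerm.theta 1)^[n] x) := by
  induction n with
  | zero => exact hx
  | succ n ih => rw [Function.iterate_succ_apply']; exact Tw.mk1 ih

lemma Tw_chi (a : VTerm) : Tw (chi a) := by
  induction a with
  | zero => exact Tw.zero
  | phi n a ih => exact Tw.mk0 (Tw_tow ih n)

lemma k0_chi (a : VTerm) : TTerm.k 0 (chi a) = chi a := by
  cases a <;> simp [chi, TTerm.k]

lemma k0_tow (n : ℕ) (a : VTerm) :
    TTerm.k 0 ((TTerm.theta 1)^[n] (chi a)) = chi a := by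
  induction n with
  | zero => exact k0_chi a
  | succ n ih =>
      rw [Function.iterate_succ_apply']
      simpa [TTerm.k] using ih

lemma chi_lt_theta1 (a : VTerm) (t : TTerm) : Lt (chi a) (TTerm.theta 1 t) := by
  cases a with
  | zero => exact Lt.zero (by simp)
  | phi n b => exact Lt.idx (by omega)

lemma tw_aux {z : TTerm} (hz : Tw z)
    (ih1 : ∀ y, Tw y → Lt z y → Lt z (TTerm.theta 1 y))
    (ih2 : Lt z (TTerm.theta 1 z)) :
    ∀ y, Tw y → Lt (TTerm.theta 1 z) y → Lt z y := by
  intro y hy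
  induction hy with
  | zero => intro h; cases h
  | mk0 hw ihw => intro h; cases h with
      | idx h => omega
  | @mk1 w hw ihw =>
      intro h
      cases h with
      | idx h => omega
      | left hzw hk =>
          rw [k1_eq hz] at hk
          exact hk
      | right hwz hle =>
          rw [k1_eq hw] at hle
          cases hle with
          | refl => exact ih1 _ (Tw.mk1 hz) ih2
          | of_lt h' => exact ih1 w hw (ihw h')

lemma tw_main {x : TTerm} (hx : Tw x) :
    (∀ y, Tw y → Lt x y → Lt x (TTerm.theta 1 y)) ∧ Lt x (TTerm.theta 1 x) := by
  induction hx with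
  | zero =>
      exact ⟨fun y hy h => Lt.zero (by simp), Lt.zero (by simp)⟩
  | mk0 hz ih =>
      exact ⟨fun y hy h => Lt.idx (by omega), Lt.idx (by omega)⟩
  | @mk1 z hz ih =>
      obtain ⟨ih1, ih2⟩ := ih
      have part2 : Lt (TTerm.theta 1 z) (TTerm.theta 1 (TTerm.theta 1 z)) := by
        apply Lt.left ih2
        rw [k1_eq hz]
        exact ih1 _ (Tw.mk1 hz) ih2
      refine ⟨fun y hy h => ?_, part2⟩
      have hzy : Lt z y := tw_aux hz ih1 ih2 y hy h
      apply Lt.left hzy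
      rw [k1_eq hz]
      exact ih1 y hy hzy

lemma mono1 {x y : TTerm} (hx : Tw x) (hy : Tw y) (h : Lt x y) :
    Lt (TTerm.theta 1 x) (TTerm.theta 1 y) := by
  apply Lt.left h
  rw [k1_eq hx]
  exact (tw_main hx).1 y hy h

lemma mono_iter (j : ℕ) {x y : TTerm} (hx : Tw x) (hy : Tw y) (h : Lt x y) :
    Lt ((TTerm.theta 1)^[j] x) ((TTerm.theta 1)^[j] y) := by
  induction j with
  | zero => exact h
  | succ j ih =>
      rw [Function.iterate_succ_apply', Function.iterate_succ_apply']
      exact mono1 (Tw_tow hx j) (Tw_tow hy j) ih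

lemma lt_tow_of_lt {n m : ℕ} (a b : VTerm) (hnm : n < m) :
    Lt ((TTerm.theta 1)^[n] (chi a)) ((TTerm.theta 1)^[m] (chi b)) := by
  obtain ⟨j, rfl⟩ : ∃ j, m = n + (j + 1) := ⟨m - n - 1, by omega⟩
  rw [Function.iterate_add_apply]
  apply mono_iter n (Tw_chi a) (Tw_tow (Tw_chi b) (j + 1))
  rw [Function.iterate_succ_apply']
  exact chi_lt_theta1 a _

/- Veblen side lemmas. -/

lemma vaux {p : ℕ} {c : VTerm}
    (ih1 : ∀ n b, VTerm.Lt c b → VTerm.Lt c (VTerm.phi n b))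
    (ih2 : ∀ n, VTerm.Lt c (VTerm.phi n c)) :
    ∀ d, VTerm.Lt (VTerm.phi p c) d → VTerm.Lt c d := by
  intro d
  induction d with
  | zero => intro h; cases h
  | phi q e ihe =>
      intro h
      cases h with
      | lt hpq hc => exact hc
      | eq hcd => exact ih1 _ _ hcd
      | gt hqp hle =>
          cases hle with
          | refl => exact ih1 q _ (ih2 p)
          | of_lt h' => exact ih1 _ _ (ihe h')

lemma vphi (a : VTerm) :
    (∀ n b, VTerm.Lt a b → VTerm.Lt a (VTerm.phi n b)) ∧
      (∀ n, VTerm.Lt a (VTerm.phi n a)) := by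
  induction a with
  | zero => exact ⟨fun n b h => VTerm.Lt.zero (by simp), fun n => VTerm.Lt.zero (by simp)⟩
  | phi p c ih =>
      obtain ⟨ih1, ih2⟩ := ih
      have part2 : ∀ n, VTerm.Lt (VTerm.phi p c) (VTerm.phi n (VTerm.phi p c)) := by
        intro n
        rcases Nat.lt_trichotomy p n with h | h | h
        · exact VTerm.Lt.lt h (ih1 n _ (ih2 p))
        · subst h; exact VTerm.Lt.eq (ih2 p)
        · exact VTerm.Lt.gt h VTerm.Le.refl
      refine ⟨fun n b h => ?_, part2⟩
      cases b with
      | zero => cases h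
      | phi m d =>
          have key : VTerm.Lt c (VTerm.phi m d) := by
            cases h with
            | lt hpm hc => exact hc
            | eq hcd => exact ih1 _ _ hcd
            | gt hmp hle =>
                cases hle with
                | refl => exact ih1 m _ (ih2 p)
                | of_lt h' => exact ih1 _ _ (vaux ih1 ih2 d h')
          rcases Nat.lt_trichotomy p n with hpn | hpn | hpn
          · exact VTerm.Lt.lt hpn (ih1 n _ key)
          · subst hpn; exact VTerm.Lt.eq key
          · exact VTerm.Lt.gt hpn (VTerm.Le.of_lt h)

lemma vsize_pos (a : VTerm) : 1 ≤ sizeOf a := by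
  cases a <;> simp <;> omega

lemma vsize_lt (n : ℕ) (a : VTerm) : sizeOf a < sizeOf (VTerm.phi n a) := by
  simp

lemma chi_main : ∀ (N : ℕ) (α β : VTerm), sizeOf α + sizeOf β ≤ N →
    VTerm.Lt α β → Lt (chi α) (chi β) := by
  intro N
  induction N with
  | zero =>
      intro α β hs h
      have h1 := vsize_pos α
      have h2 := vsize_pos β
      omega
  | succ N ihN =>
      intro α β hs h
      cases h with
      | zero hne =>
          cases β with
          | zero => exact absurd rfl hne
          | phi m b =>
              simp only [chi]
              exact Lt.zero (by simp)
      | @lt n m a b hnm ha =>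
          have hsz : sizeOf a + sizeOf (VTerm.phi m b) ≤ N := by
            have := vsize_lt n a; omega
          have IH := ihN a (VTerm.phi m b) hsz ha
          simp only [chi] at IH ⊢
          apply Lt.left (lt_tow_of_lt a b hnm)
          rw [k0_tow]
          exact IH
      | @eq n a b hab =>
          have h1 : sizeOf a + sizeOf b ≤ N := by
            have := vsize_lt n a; have := vsize_lt n b; omega
          have h2 : sizeOf a + sizeOf (VTerm.phi n b) ≤ N := by
            have := vsize_lt n a; omega
          have IH1 := ihN a b h1 hab
          have IH2 := ihN a (VTerm.phi n b) h2 ((vphi a).1 n b hab)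
          simp only [chi] at IH2 ⊢
          apply Lt.left (mono_iter n (Tw_chi a) (Tw_chi b) IH1)
          rw [k0_tow]
          exact IH2
      | @gt n m a b hmn hb =>
          simp only [chi]
          apply Lt.right (lt_tow_of_lt b a hmn)
          rw [k0_tow]
          cases hb with
          | refl => simp only [chi]; exact Le.refl
          | of_lt h' =>
              have hsz : sizeOf (VTerm.phi n a) + sizeOf b ≤ N := by
                have := vsize_lt m b; omega
              exact Le.of_lt (ihN (VTerm.phi n a) b hsz h')

end Aux

/-- `χ` is order-preserving. -/
theorem stmt8 (α β : VTerm) (h : VTerm.Lt α β) : TTerm.Lt (chi α) (chi β) := by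
  exact chi_main (sizeOf α + sizeOf β) α β le_rfl h
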